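/- Suppose M is a totally k-bounded L-structure over a finite relational language L of maximum arity r ≥ 2, and M contains an infinite connected component A. Then for every integer t ≥ 1 there exists t' with t ≤ t' ≤ tr and a connected subset A' ⊆ A with |A'| = t'. -/

import Mathlib

open FirstOrder FirstOrder.Language

/-- One step of a path inside `A`: `x` and `y` occur in a common relation tuple of the
structure all of whose entries lie in `A`. -/
def StepIn (L : FirstOrder.Language) {M : Type*} [L.Structure M] (A : Set M)
    (x y : M) : Prop :=
  x ∈ A ∧ y ∈ A ∧ ∃ (n : ℕ) (R : L.Relations n) (v : Fin n → M),
    Structure.RelMap R v ∧ (∀ i, v i ∈ A) ∧ x ∈ Set.range v ∧ y ∈ Set.range v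

/-- A set is connected if any two of its elements are joined by a path of overlapping
relation tuples inside the set. -/
def IsConnectedSet (L : FirstOrder.Language) {M : Type*} [L.Structure M]
    (A : Set M) : Prop :=
  ∀ a ∈ A, ∀ b ∈ A, Relation.ReflTransGen (StepIn L A) a b

/-- A component is a maximal connected set. -/
def IsComponent (L : FirstOrder.Language) {M : Type*} [L.Structure M]
    (A : Set M) : Prop :=
  IsConnectedSet L A ∧ ∀ B : Set M, A ⊆ B → IsConnectedSet L B → B = A

/-- Totally `k`-bounded: for every relation `R` of arity `s` and every proper nonempty
set `I` of coordinates, any assignment to the `I`-coordinates has fewer than `k`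
completions to a tuple satisfying `R`. -/
def TotallyBddStruct (L : FirstOrder.Language) (M : Type*) [L.Structure M]
    (k : ℕ) : Prop :=
  ∀ (s : ℕ) (R : L.Relations s) (I : Finset (Fin s)), I.Nonempty → I ≠ Finset.univ →
    ∀ v : Fin s → M,
      {w : Fin s → M | Structure.RelMap R w ∧ ∀ i ∈ I, w i = v i}.Finite ∧
      {w : Fin s → M | Structure.RelMap R w ∧ ∀ i ∈ I, w i = v i}.ncard < k

section Aux

variable {L : FirstOrder.Language} {M : Type*} [L.Structure M]

lemma stepIn_mono {A B : Set M} (h : A ⊆ B) {x y : M} (hs : StepIn L A x y) :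
    StepIn L B x y := by
  obtain ⟨hx, hy, n, R, v, hR, hv, hxr, hyr⟩ := hs
  exact ⟨h hx, h hy, n, R, v, hR, fun i => h (hv i), hxr, hyr⟩

lemma stepIn_symm {A : Set M} : Symmetric (StepIn L A) := by
  rintro x y ⟨hx, hy, n, R, v, hR, hv, hxr, hyr⟩
  exact ⟨hy, hx, n, R, v, hR, hv, hyr, hxr⟩

lemma crossing {A S : Set M} {a b : M} (h : Relation.ReflTransGen (StepIn L A) a b)
    (ha : a ∈ S) (hb : b ∉ S) : ∃ x y, x ∈ S ∧ y ∉ S ∧ StepIn L A x y := by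
  revert ha
  induction h using Relation.ReflTransGen.head_induction_on with
  | refl => exact fun ha => absurd ha hb
  | @head p q hxy _ ih =>
    intro ha
    by_cases hq : q ∈ S
    · exact ih hq
    · exact ⟨p, q, ha, hq, hxy⟩

lemma extendConn {A : Set M} (hA : IsConnectedSet L A) (hAinf : A.Infinite)
    (r : ℕ) (harity : ∀ n, r < n → IsEmpty (L.Relations n))
    {A' : Set M} (hsub : A' ⊆ A) (hconn : IsConnectedSet L A')
    (hfin : A'.Finite) (hne : A'.Nonempty) :
    ∃ A'' : Set M, A'' ⊆ A ∧ IsConnectedSet L A'' ∧ A''.Finite ∧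
      A'.ncard < A''.ncard ∧ A''.ncard ≤ A'.ncard + r := by
  classical
  obtain ⟨a, ha⟩ := hne
  obtain ⟨b, hbA, hbA'⟩ := (hAinf.diff hfin).nonempty
  obtain ⟨x, y, hxS, hyS, hstep⟩ := crossing (hA a (hsub ha) b hbA) ha hbA'
  obtain ⟨hxA, hyA, n, R, v, hR, hv, hxr, hyr⟩ := hstep
  have hn : n ≤ r := by
    by_contra h
    exact (harity n (lt_of_not_ge h)).false R
  refine ⟨A' ∪ Set.range v, ?_, ?_, hfin.union (Set.finite_range v), ?_, ?_⟩
  · exact Set.union_subset hsub (Set.range_subset_iff.mpr hv)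
  · -- connectedness: everything connects to x
    have key : ∀ p ∈ A' ∪ Set.range v,
        Relation.ReflTransGen (StepIn L (A' ∪ Set.range v)) p x := by
      rintro p (hp | hp)
      · exact Relation.ReflTransGen.mono (fun _ _ h => stepIn_mono Set.subset_union_left h) p x (hconn p hp x hxS)
      · exact Relation.ReflTransGen.single
          ⟨Or.inr hp, Or.inl hxS, n, R, v, hR, fun i => Or.inr ⟨i, rfl⟩, hp, hxr⟩
    intro p hp q hq
    haveI : Std.Symm (StepIn L (A' ∪ Set.range v)) := ⟨fun a b h => stepIn_symm h⟩
    exact (key p hp).trans (Std.Symm.symm _ _ (key q hq))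
  · refine Set.ncard_lt_ncard ⟨Set.subset_union_left, ?_⟩ (hfin.union (Set.finite_range v))
    intro hsub'
    exact hyS (hsub' (Or.inr hyr))
  · calc (A' ∪ Set.range v).ncard ≤ A'.ncard + (Set.range v).ncard :=
          Set.ncard_union_le _ _
      _ ≤ A'.ncard + n := by
          gcongr
          rw [← Set.image_univ, ← Finset.coe_univ, ← Finset.coe_image, Set.ncard_coe_finset]
          exact (Finset.card_image_le).trans (by simp)
      _ ≤ A'.ncard + r := by omega

end Aux

/-- if a totally `k`-bounded structure over a finite relational language of
maximum arity `r ≥ 2` has an infinite connected component `A`, then for every `t ≥ 1`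
there is `t ≤ t' ≤ tr` and a connected subset `A' ⊆ A` of size `t'`. -/
theorem stmt13 (L : FirstOrder.Language) [L.IsRelational]
    [∀ n, Finite (L.Relations n)] (r k : ℕ) (hr : 2 ≤ r)
    (harity : ∀ n, r < n → IsEmpty (L.Relations n))
    (M : Type*) [L.Structure M] (hbdd : TotallyBddStruct L M k)
    (A : Set M) (hA : IsComponent L A) (hinf : A.Infinite) :
    ∀ t : ℕ, 1 ≤ t → ∃ t', t ≤ t' ∧ t' ≤ t * r ∧
      ∃ A' ⊆ A, IsConnectedSet L A' ∧ A'.Finite ∧ A'.ncard = t' := by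
  have main : ∀ t : ℕ, 1 ≤ t → ∃ A' ⊆ A, IsConnectedSet L A' ∧ A'.Finite ∧
      t ≤ A'.ncard ∧ A'.ncard ≤ t * r := by
    intro t
    induction t with
    | zero => omega
    | succ t ih =>
      intro _
      rcases Nat.eq_zero_or_pos t with ht0 | ht1
      · -- base case t + 1 = 1 : take a singleton
        subst ht0
        obtain ⟨a, haA⟩ := hinf.nonempty
        refine ⟨{a}, by simpa using haA, ?_, Set.finite_singleton a, by simp, by simp; omega⟩
        intro p hp q hq
        simp only [Set.mem_singleton_iff] at hp hq
        subst hp; subst hq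
        exact Relation.ReflTransGen.refl
      · obtain ⟨A', hsub, hconn, hfin, hlow, hhigh⟩ := ih ht1
        rcases Nat.lt_or_ge t A'.ncard with hlt | hge
        · exact ⟨A', hsub, hconn, hfin, hlt, hhigh.trans (by nlinarith)⟩
        · -- A'.ncard = t; extend
          have hne : A'.Nonempty := by
            rw [Set.nonempty_iff_ne_empty]
            intro h
            rw [h, Set.ncard_empty] at hlow
            omega
          obtain ⟨A'', hsub'', hconn'', hfin'', h1, h2⟩ :=
            extendConn hA.1 hinf r harity hsub hconn hfin hne
          refine ⟨A'', hsub'', hconn'', hfin'', by omega, ?_⟩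
          have : A'.ncard = t := le_antisymm hge hlow
          nlinarith
  intro t ht
  obtain ⟨A', hsub, hconn, hfin, h1, h2⟩ := main t ht
  exact ⟨A'.ncard, h1, h2, A', hsub, hconn, hfin, rfl⟩
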